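/- arXiv:1206.3672 — 2 statements merged into one kernel-verified Lean document; each statement's English description precedes it below -/
import Mathlib

section
/- For a bounded Borel set A, define the transportation cost on A as the random variable C_A(omega) := inf{Cost(q) : q a semicoupling of lambda^omega and 1_A mu^omega}. Then: (1) for every omega and every finite family of pairwise disjoint bounded Borel sets A_1, ..., A_n, one has C_{A_1 union ... union A_n}(omega) >= C_{A_1}(omega) + ... + C_{A_n}(omega); (2) if lambda^bullet and mu^bullet are equivariant and A_1 = g A_2 for some g in G, then the random variables C_{A_1} and C_{A_2} are identically distributed. -/
open MeasureTheory ENNReal Filter Topology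
open scoped Pointwise ENNReal symmDiff

/-- The cost function on `M × M` induced by a scale function `ϑ` : `c(x,y) = ϑ(d(x,y))`. -/
noncomputable def costFn {M : Type*} [MetricSpace M] (ϑ : ℝ → ℝ) (p : M × M) : ℝ≥0∞ :=
  ENNReal.ofReal (ϑ (dist p.1 p.2))

/-- A scale function: continuous, strictly increasing on `[0,∞)`, `ϑ(0)=0`, `ϑ(r)→∞`. -/
structure IsScaleFn (ϑ : ℝ → ℝ) : Prop where
  continuous : Continuous ϑ
  strictMono : StrictMonoOn ϑ (Set.Ici (0:ℝ))
  map_zero : ϑ 0 = 0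
  tendsto_atTop : Tendsto ϑ atTop atTop

/-- Total transportation cost of a transport plan `q` for cost `c(x,y)=ϑ(d(x,y))`. -/
noncomputable def Cost {M : Type*} [MetricSpace M] [MeasurableSpace M]
    (ϑ : ℝ → ℝ) (q : Measure (M × M)) : ℝ≥0∞ :=
  ∫⁻ p, costFn ϑ p ∂q

/-- `q` is a semicoupling of `lam` and `mu`: first marginal `≤ lam`, second marginal `= mu`. -/
def IsSemicoupling {M : Type*} [MeasurableSpace M] (lam mu : Measure M)
    (q : Measure (M × M)) : Prop :=
  q.fst ≤ lam ∧ q.snd = mu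

/-- `q` is a coupling of `lam` and `mu`. -/
def IsCoupling {M : Type*} [MeasurableSpace M] (lam mu : Measure M)
    (q : Measure (M × M)) : Prop :=
  q.fst = lam ∧ q.snd = mu

/-- A measure is compactly supported if it vanishes outside some compact set. -/
def HasCompactSupportMeas {M : Type*} [TopologicalSpace M] [MeasurableSpace M]
    (μ : Measure M) : Prop :=
  ∃ K : Set M, IsCompact K ∧ μ Kᶜ = 0

/-- The support of a measure: points all of whose neighbourhoods have positive mass. -/
def msupport {M : Type*} [TopologicalSpace M] [MeasurableSpace M] (μ : Measure M) : Set M :=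
  {x | ∀ U ∈ nhds x, 0 < μ U}

/-- Monge uniqueness assumption: for compactly supported probability measures `lam ≪ m` and
`mu`, the Monge-Kantorovich problem with cost `ϑ ∘ d` has a unique minimizer, induced by a
measurable transport map. -/
def MongeUnique {M : Type*} [MetricSpace M] [MeasurableSpace M]
    (m : Measure M) (ϑ : ℝ → ℝ) : Prop :=
  ∀ lam mu : Measure M, IsProbabilityMeasure lam → IsProbabilityMeasure mu →
    HasCompactSupportMeas lam → HasCompactSupportMeas mu → lam ≪ m →
    (∃! q : Measure (M × M), IsCoupling lam mu q ∧
        ∀ q' : Measure (M × M), IsCoupling lam mu q' → Cost ϑ q ≤ Cost ϑ q') ∧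
    (∀ q : Measure (M × M),
      (IsCoupling lam mu q ∧ ∀ q' : Measure (M × M), IsCoupling lam mu q' →
          Cost ϑ q ≤ Cost ϑ q') →
      ∃ T : M → M, Measurable T ∧ q = Measure.map (fun x => (x, T x)) lam)

section GroupSetup

variable {M : Type*} [MetricSpace M] [MeasurableSpace M]
variable {Ω : Type*} [MeasurableSpace Ω]

/-- A (strict) fundamental domain for the action of `G` on `M`: a Borel set whose translates
are pairwise disjoint and cover `M`. -/
def IsFundDom (G : Type*) [Group G] [MulAction G M] (F : Set M) : Prop :=
  MeasurableSet F ∧ ∀ x : M, ∃! g : G, x ∈ g • F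

/-- Admissible sets: finite nonempty unions of translates of a fundamental domain. -/
def Adm (G : Type*) [Group G] [MulAction G M] (B : Set M) : Prop :=
  ∃ (F : Set M) (I : Set G), IsFundDom G F ∧ I.Finite ∧ I.Nonempty ∧ B = ⋃ g ∈ I, g • F

/-- The action of `G` on `M` is properly discontinuous. -/
def ProperlyDiscontinuousAct (G : Type*) [Group G] [MulAction G M] : Prop :=
  ∀ (x : M) (K : Set M), IsCompact K → {g : G | g • x ∈ K}.Finite

/-- The action of `G` on `M` is cocompact. -/
def CocompactAct (G : Type*) [Group G] [MulAction G M] : Prop :=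
  ∃ K : Set M, IsCompact K ∧ ⋃ g : G, g • K = Set.univ

/-- The action of `G` on `M` is free. -/
def FreeAct (G : Type*) [Group G] [MulAction G M] : Prop :=
  ∀ (g : G) (x : M), g • x = x → g = 1

/-- `θ` is a measurable flow on `Ω` indexed by `G`. -/
structure IsFlow {G : Type*} [Group G] (θ : G → Ω → Ω) : Prop where
  measurable : ∀ g : G, Measurable (θ g)
  map_one : θ 1 = id
  map_mul : ∀ g h : G, θ g ∘ θ h = θ (g * h)

/-- `P` is stationary under the flow `θ`. -/
def Stationary {G : Type*} [Group G] (θ : G → Ω → Ω) (P : Measure Ω) : Prop :=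
  ∀ g : G, P.map (θ g) = P

/-- An equivariant random measure: `λ^{θ_g ω}(gA) = λ^ω(A)`, i.e.
`λ^{θ_g ω} = (g•)_* λ^ω`. -/
def EquivRandMeasure {G : Type*} [Group G] [MulAction G M] (θ : G → Ω → Ω)
    (lam : Ω → Measure M) : Prop :=
  ∀ (g : G) (ω : Ω), lam (θ g ω) = Measure.map (fun x => g • x) (lam ω)

/-- An equivariant random measure on `M × M` (under the diagonal action). -/
def EquivRandCoupling {G : Type*} [Group G] [MulAction G M] (θ : G → Ω → Ω)
    (q : Ω → Measure (M × M)) : Prop :=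
  ∀ (g : G) (ω : Ω), q (θ g ω) = Measure.map (fun p : M × M => (g • p.1, g • p.2)) (q ω)

/-- The random measure `lam` has intensity `β` (w.r.t. the reference measure `m`). -/
def HasIntensity (m : Measure M) (P : Measure Ω) (lam : Ω → Measure M) (β : ℝ≥0∞) : Prop :=
  ∀ A : Set M, MeasurableSet A → ∫⁻ ω, lam ω A ∂P = β * m A

/-- The random measure `lam` is absolutely continuous w.r.t. `m`, a.s. -/
def AbsContRand (m : Measure M) (P : Measure Ω) (lam : Ω → Measure M) : Prop :=
  ∀ᵐ ω ∂P, lam ω ≪ m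

/-- A semicoupling of the random measures `lam` and `mu`. -/
def IsRandSemicoupling (P : Measure Ω) (lam mu : Ω → Measure M)
    (q : Ω → Measure (M × M)) : Prop :=
  Measurable q ∧ ∀ᵐ ω ∂P, IsSemicoupling (lam ω) (mu ω) (q ω)

/-- A coupling of the random measures `lam` and `mu`. -/
def IsRandCoupling (P : Measure Ω) (lam mu : Ω → Measure M)
    (q : Ω → Measure (M × M)) : Prop :=
  Measurable q ∧ ∀ᵐ ω ∂P, IsCoupling (lam ω) (mu ω) (q ω)

/-- The mean transportation cost of a (semi)coupling: supremum over admissible sets `B` of the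
normalized expected cost of the transport into `B`. -/
noncomputable def meanCost (G : Type*) [Group G] [MulAction G M] (m : Measure M)
    (P : Measure Ω) (ϑ : ℝ → ℝ) (q : Ω → Measure (M × M)) : ℝ≥0∞ :=
  ⨆ B ∈ {B : Set M | Adm G B},
    (m B)⁻¹ * ∫⁻ ω, ∫⁻ p in Set.univ ×ˢ B, costFn ϑ p ∂(q ω) ∂P

/-- The optimal mean transportation cost over equivariant semicouplings. -/
noncomputable def ceInftySemi (G : Type*) [Group G] [MulAction G M] (m : Measure M)
    (P : Measure Ω) (ϑ : ℝ → ℝ) (θ : G → Ω → Ω) (lam mu : Ω → Measure M) : ℝ≥0∞ :=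
  ⨅ q ∈ {q : Ω → Measure (M × M) |
      IsRandSemicoupling P lam mu q ∧ EquivRandCoupling θ q},
    meanCost G m P ϑ q

/-- The optimal mean transportation cost over equivariant couplings. -/
noncomputable def ceInftyCoup (G : Type*) [Group G] [MulAction G M] (m : Measure M)
    (P : Measure Ω) (ϑ : ℝ → ℝ) (θ : G → Ω → Ω) (lam mu : Ω → Measure M) : ℝ≥0∞ :=
  ⨅ q ∈ {q : Ω → Measure (M × M) |
      IsRandCoupling P lam mu q ∧ EquivRandCoupling θ q},
    meanCost G m P ϑ q

/-- An optimal semicoupling: equivariant and attaining the optimal mean transportation cost. -/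
def IsOptSemicoupling (G : Type*) [Group G] [MulAction G M] (m : Measure M)
    (P : Measure Ω) (ϑ : ℝ → ℝ) (θ : G → Ω → Ω) (lam mu : Ω → Measure M)
    (q : Ω → Measure (M × M)) : Prop :=
  IsRandSemicoupling P lam mu q ∧ EquivRandCoupling θ q ∧
    meanCost G m P ϑ q = ceInftySemi G m P ϑ θ lam mu

/-- An optimal coupling: equivariant and attaining the optimal mean transportation cost. -/
def IsOptCoupling (G : Type*) [Group G] [MulAction G M] (m : Measure M)
    (P : Measure Ω) (ϑ : ℝ → ℝ) (θ : G → Ω → Ω) (lam mu : Ω → Measure M)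
    (q : Ω → Measure (M × M)) : Prop :=
  IsRandCoupling P lam mu q ∧ EquivRandCoupling θ q ∧
    meanCost G m P ϑ q = ceInftyCoup G m P ϑ θ lam mu

end GroupSetup

/-- The transportation cost on `A`: optimal cost of semicouplings of `λ^ω` and `1_A μ^ω`. -/
noncomputable def transpCostOn {M : Type*} [MetricSpace M] [MeasurableSpace M]
    {Ω : Type*} (ϑ : ℝ → ℝ) (lam mu : Ω → Measure M) (A : Set M) (ω : Ω) : ℝ≥0∞ :=
  ⨅ q ∈ {q : Measure (M × M) | IsSemicoupling (lam ω) ((mu ω).restrict A) q}, Cost ϑ q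

theorem transport_cost_superadditive_and_equivariant
    {M : Type*} [MetricSpace M] [MeasurableSpace M] [BorelSpace M]
    [ProperSpace M] [SecondCountableTopology M]
    {Ω : Type*} [MeasurableSpace Ω]
    (G : Type*) [Group G] [Countable G] [MulAction G M]
    (m : Measure M) [IsLocallyFiniteMeasure m]
    -- G acts on M by measure-preserving isometries, properly discontinuously,
    -- cocompactly and freely
    (hiso : ∀ g : G, Isometry (fun x : M => g • x))
    (hmp : ∀ g : G, MeasurePreserving (fun x : M => g • x) m m)
    (hpd : ProperlyDiscontinuousAct (M := M) G) (hcc : CocompactAct (M := M) G)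
    (hfree : FreeAct (M := M) G)
    (ϑ : ℝ → ℝ) (hϑ : IsScaleFn ϑ)
    (P : Measure Ω) [IsProbabilityMeasure P]
    (θ : G → Ω → Ω) (hθ : IsFlow θ) (hstat : Stationary θ P)
    (lam mu : Ω → Measure M) (hlammeas : Measurable lam) (hmumeas : Measurable mu)
    (hlameq : EquivRandMeasure θ lam) (hmueq : EquivRandMeasure θ mu) :
    -- (1) superadditivity over disjoint bounded Borel sets
    (∀ (ω : Ω) (n : ℕ) (A : Fin n → Set M),
      (∀ i, MeasurableSet (A i)) → (∀ i, Bornology.IsBounded (A i)) →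
      (Pairwise fun i j => Disjoint (A i) (A j)) →
      ∑ i, transpCostOn ϑ lam mu (A i) ω ≤ transpCostOn ϑ lam mu (⋃ i, A i) ω) ∧
    -- (2) if `A₁ = g A₂`, then the transportation costs on `A₁` and `A₂` are
    --     identically distributed
    (∀ (g : G) (A₁ A₂ : Set M), MeasurableSet A₁ → MeasurableSet A₂ →
      Bornology.IsBounded A₁ → Bornology.IsBounded A₂ → A₁ = g • A₂ →
      P.map (transpCostOn ϑ lam mu A₁) = P.map (transpCostOn ϑ lam mu A₂)) := by
  classical
  -- measurability of smul maps
  have hsm : ∀ g : G, Measurable (fun x : M => g • x) :=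
    fun g => (hiso g).continuous.measurable
  have hsmulA : ∀ (g : G) (A : Set M), MeasurableSet A → MeasurableSet (g • A) := by
    intro g A hA
    have : (fun x : M => g⁻¹ • x) ⁻¹' A = g • A := by
      ext x; simp [Set.mem_smul_set_iff_inv_smul_mem]
    rw [← this]
    exact (hsm g⁻¹) hA
  have hcost_meas : Measurable (costFn (M := M) ϑ) := by
    have : Continuous (costFn (M := M) ϑ) :=
      ENNReal.continuous_ofReal.comp (hϑ.continuous.comp continuous_dist)
    exact this.measurable
  constructor
  · -- superadditivity
    intro ω n A hAm hAb hdisj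
    rw [transpCostOn]
    refine le_iInf₂ fun q hq => ?_
    -- restrict q to univ ×ˢ A i
    have hqi : ∀ i, IsSemicoupling (lam ω) ((mu ω).restrict (A i))
        (q.restrict (Set.univ ×ˢ A i)) := by
      intro i
      constructor
      · calc (q.restrict (Set.univ ×ˢ A i)).fst
            ≤ q.fst := Measure.map_mono (Measure.restrict_le_self) measurable_fst
          _ ≤ lam ω := hq.1
      · have hpre : (Prod.snd ⁻¹' (A i) : Set (M × M)) = Set.univ ×ˢ A i := by
          ext p; simp
        have := (Measure.restrict_map (measurable_snd (α := M) (β := M)) (hAm i)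
          (μ := q)).symm
        calc (q.restrict (Set.univ ×ˢ A i)).snd
            = (q.restrict (Prod.snd ⁻¹' A i)).map Prod.snd := by rw [hpre]; rfl
          _ = (q.map Prod.snd).restrict (A i) :=
              (Measure.restrict_map measurable_snd (hAm i)).symm
          _ = ((mu ω).restrict (⋃ j, A j)).restrict (A i) := by
              rw [show q.map Prod.snd = q.snd from rfl, hq.2]
          _ = (mu ω).restrict (A i) := by
              rw [Measure.restrict_restrict (hAm i), Set.inter_eq_left.2
                (Set.subset_iUnion A i)]
    have h1 : ∀ i, transpCostOn ϑ lam mu (A i) ω ≤ Cost ϑ (q.restrict (Set.univ ×ˢ A i)) :=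
      fun i => iInf₂_le _ (hqi i)
    calc ∑ i, transpCostOn ϑ lam mu (A i) ω
        ≤ ∑ i, Cost ϑ (q.restrict (Set.univ ×ˢ A i)) := Finset.sum_le_sum fun i _ => h1 i
      _ = ∑' i, ∫⁻ p in Set.univ ×ˢ A i, costFn ϑ p ∂q := by
          rw [tsum_fintype]; rfl
      _ = ∫⁻ p in ⋃ i, Set.univ ×ˢ A i, costFn ϑ p ∂q :=
          (lintegral_iUnion (fun i => MeasurableSet.univ.prod (hAm i))
            (fun i j hij => (Set.disjoint_prod).2 (Or.inr (hdisj hij)))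
            (costFn ϑ)).symm
      _ ≤ ∫⁻ p, costFn ϑ p ∂q := setLIntegral_le_lintegral _ _
      _ = Cost ϑ q := rfl
  · -- equivariance in distribution
    intro g A₁ A₂ hA₁ hA₂ hb₁ hb₂ hA12
    -- key monotone lemma
    have key : ∀ (g : G) (A : Set M), MeasurableSet A → ∀ ω : Ω,
        transpCostOn ϑ lam mu (g • A) (θ g ω) ≤ transpCostOn ϑ lam mu A ω := by
      intro g A hA ω
      rw [transpCostOn, transpCostOn]
      refine le_iInf₂ fun q hq => ?_
      set F : M × M → M × M := fun p => (g • p.1, g • p.2) with hF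
      have hFm : Measurable F := ((hsm g).comp measurable_fst).prod
        ((hsm g).comp measurable_snd)
      have hfst : (q.map F).fst = (q.fst).map (fun x => g • x) := by
        show (q.map F).map Prod.fst = (q.map Prod.fst).map _
        rw [Measure.map_map measurable_fst hFm,
          Measure.map_map (hsm g) measurable_fst]
        rfl
      have hsnd : (q.map F).snd = (q.snd).map (fun x => g • x) := by
        show (q.map F).map Prod.snd = (q.map Prod.snd).map _
        rw [Measure.map_map measurable_snd hFm,
          Measure.map_map (hsm g) measurable_snd]
        rfl
      have hpre : (fun x : M => g • x) ⁻¹' (g • A) = A := by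
        ext x; simp [Set.mem_smul_set_iff_inv_smul_mem]
      have hsc : IsSemicoupling (lam (θ g ω)) ((mu (θ g ω)).restrict (g • A)) (q.map F) := by
        constructor
        · rw [hfst, hlameq g ω]
          exact Measure.map_mono hq.1 (hsm g)
        · rw [hsnd, hq.2, hmueq g ω,
            Measure.restrict_map (hsm g) (hsmulA g A hA), hpre]
      refine (iInf₂_le _ hsc).trans_eq ?_
      rw [Cost, Cost, lintegral_map hcost_meas hFm]
      refine lintegral_congr fun p => ?_
      simp only [costFn, F]
      rw [(hiso g).dist_eq]
    -- pointwise equality C_{A₁} ∘ θ g = C_{A₂}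
    have hθinv : ∀ (h : G) (ω : Ω), θ h⁻¹ (θ h ω) = ω := by
      intro h ω
      have := congrFun (hθ.map_mul h⁻¹ h) ω
      simp only [Function.comp_apply, inv_mul_cancel, hθ.map_one, id] at this
      exact this
    have hfun : ∀ ω : Ω, transpCostOn ϑ lam mu A₁ (θ g ω) = transpCostOn ϑ lam mu A₂ ω := by
      intro ω
      refine le_antisymm ?_ ?_
      · rw [hA12]; exact key g A₂ hA₂ ω
      · have h2 := key g⁻¹ A₁ hA₁ (θ g ω)
        rw [hθinv g ω, hA12, inv_smul_smul] at h2
        rw [hA12]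
        exact h2
    have hfun' : ∀ ω : Ω, transpCostOn ϑ lam mu A₂ (θ g⁻¹ ω) = transpCostOn ϑ lam mu A₁ ω := by
      intro ω
      have := hfun (θ g⁻¹ ω)
      have h3 : θ g (θ g⁻¹ ω) = ω := by
        have := congrFun (hθ.map_mul g g⁻¹) ω
        simp only [Function.comp_apply, mul_inv_cancel, hθ.map_one, id] at this
        exact this
      rw [h3] at this
      exact this.symm
    by_cases hmeas2 : AEMeasurable (transpCostOn ϑ lam mu A₂) P
    · have hmg : AEMeasurable (θ g⁻¹) P := (hθ.measurable g⁻¹).aemeasurable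
      have hmeas2' : AEMeasurable (transpCostOn ϑ lam mu A₂) (P.map (θ g⁻¹)) := by
        rw [hstat g⁻¹]; exact hmeas2
      calc P.map (transpCostOn ϑ lam mu A₁)
          = P.map (transpCostOn ϑ lam mu A₂ ∘ θ g⁻¹) := by
            congr 1; ext ω; exact (hfun' ω).symm
        _ = (P.map (θ g⁻¹)).map (transpCostOn ϑ lam mu A₂) :=
            (AEMeasurable.map_map_of_aemeasurable hmeas2' hmg).symm
        _ = P.map (transpCostOn ϑ lam mu A₂) := by rw [hstat g⁻¹]
    · have hmeas1 : ¬ AEMeasurable (transpCostOn ϑ lam mu A₁) P := by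
        intro h1
        apply hmeas2
        have h1' : AEMeasurable (transpCostOn ϑ lam mu A₁) (P.map (θ g)) := by
          rw [hstat g]; exact h1
        have := h1'.comp_aemeasurable (hθ.measurable g).aemeasurable
        have heq : transpCostOn ϑ lam mu A₁ ∘ θ g = transpCostOn ϑ lam mu A₂ := funext hfun
        rwa [heq] at this
      rw [Measure.map_of_not_aemeasurable hmeas1, Measure.map_of_not_aemeasurable hmeas2]
end

section
/- Let Z = X_1 + ... + X_N, where N is a Poisson random variable with mean alpha > 0 and (X_i)_{i >= 1} is an i.i.d. sequence of exponentially distributed random variables with mean 1, independent of N. Then for every 0 < rho < 1: P[|Z - alpha| > alpha * rho] <= 2 * exp(-alpha * (2 + rho - 2 * sqrt(1 + rho))) <= 2 * exp(-alpha * (rho^2 / 4 - rho^3 / 8)). -/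
open MeasureTheory ProbabilityTheory
open scoped ENNReal NNReal Nat

section CPECAux

open Real Set

lemma cpec_exp_lintegral_expMeasure {t : ℝ} (ht : t < 1) :
    ∫⁻ x, ENNReal.ofReal (Real.exp (t * x)) ∂(expMeasure 1) = ENNReal.ofReal (1 / (1 - t)) := by
  have h1t : (0:ℝ) < 1 - t := by linarith
  rw [expMeasure, gammaMeasure, lintegral_withDensity_eq_lintegral_mul _ (f := gammaPDF 1 1)
    ((measurable_gammaPDFReal 1 1).ennreal_ofReal)
    (g := fun x => ENNReal.ofReal (Real.exp (t * x))) (by fun_prop)]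
  have hptw : ∀ x : ℝ, (gammaPDF 1 1 * fun x => ENNReal.ofReal (Real.exp (t * x))) x
      = (Ici (0:ℝ)).indicator (fun x => ENNReal.ofReal (Real.exp (-((1 - t) * x)))) x := by
    intro x
    rcases le_or_gt 0 x with hx | hx
    · rw [Pi.mul_apply, gammaPDF_of_nonneg hx, indicator_of_mem (Set.mem_Ici.mpr hx),
        ← ENNReal.ofReal_mul (by positivity)]
      congr 1
      rw [sub_self, Real.rpow_zero, Real.Gamma_one]
      norm_num [← Real.exp_add]
      ring_nf
    · rw [Pi.mul_apply, gammaPDF_of_neg hx, zero_mul, indicator_of_notMem (by simpa using hx)]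
  simp_rw [hptw]
  rw [lintegral_indicator measurableSet_Ici _]
  have hInt : IntegrableOn (fun x : ℝ => Real.exp (-((1 - t) * x))) (Ici 0) := by
    simp_rw [neg_mul_eq_neg_mul]
    rw [integrableOn_Ici_iff_integrableOn_Ioi]
    exact exp_neg_integrableOn_Ioi 0 h1t
  rw [← ofReal_integral_eq_lintegral_ofReal hInt (ae_of_all _ fun x => (Real.exp_pos _).le)]
  congr 1
  rw [MeasureTheory.integral_Ici_eq_integral_Ioi]
  have := integral_rpow_mul_exp_neg_mul_Ioi (one_pos) h1t
  rw [Real.Gamma_one, mul_one, Real.rpow_one] at this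
  rw [← this]
  refine setIntegral_congr_fun measurableSet_Ioi fun x hx => ?_
  rw [sub_self, Real.rpow_zero, one_mul]

lemma cpec_lintegral_exp_sum {Ω : Type*} [MeasurableSpace Ω] (P : Measure Ω)
    [IsProbabilityMeasure P]
    (X : ℕ → Ω → ℝ) (hX : ∀ i, Measurable (X i))
    (hXdist : ∀ i, P.map (X i) = expMeasure 1)
    (hXindep : iIndepFun X P)
    {t : ℝ} (ht : t < 1) (n : ℕ) :
    ∫⁻ ω, ENNReal.ofReal (Real.exp (t * ∑ i ∈ Finset.range n, X i ω)) ∂P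
      = ENNReal.ofReal (1 / (1 - t)) ^ n := by
  induction n with
  | zero => simp
  | succ n ih =>
    have hind : IndepFun (fun ω => ∑ i ∈ Finset.range n, X i ω) (X n) P := by
      have := hXindep.indepFun_sum_range_succ hX n
      rwa [Finset.sum_fn] at this
    have hφ : Measurable fun y : ℝ => ENNReal.ofReal (Real.exp (t * y)) := by fun_prop
    have hind2 : IndepFun
        (fun ω => ENNReal.ofReal (Real.exp (t * ∑ i ∈ Finset.range n, X i ω)))
        (fun ω => ENNReal.ofReal (Real.exp (t * X n ω))) P := hind.comp hφ hφ
    calc ∫⁻ ω, ENNReal.ofReal (Real.exp (t * ∑ i ∈ Finset.range (n+1), X i ω)) ∂P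
        = ∫⁻ ω, ENNReal.ofReal (Real.exp (t * ∑ i ∈ Finset.range n, X i ω))
            * ENNReal.ofReal (Real.exp (t * X n ω)) ∂P := by
          congr 1; ext ω
          rw [Finset.sum_range_succ, mul_add, Real.exp_add,
            ENNReal.ofReal_mul (Real.exp_pos _).le]
      _ = (∫⁻ ω, ENNReal.ofReal (Real.exp (t * ∑ i ∈ Finset.range n, X i ω)) ∂P)
            * ∫⁻ ω, ENNReal.ofReal (Real.exp (t * X n ω)) ∂P := by
          exact lintegral_mul_eq_lintegral_mul_lintegral_of_indepFun
            (hφ.comp (Finset.measurable_sum _ fun i _ => hX i))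
            (hφ.comp (hX n)) hind2
      _ = ENNReal.ofReal (1 / (1 - t)) ^ n * ENNReal.ofReal (1 / (1 - t)) := by
          rw [ih]
          congr 1
          rw [← lintegral_map hφ (hX n), hXdist n, cpec_exp_lintegral_expMeasure ht]
      _ = ENNReal.ofReal (1 / (1 - t)) ^ (n + 1) := by rw [pow_succ]

lemma cpec_lintegral_exp_Z {Ω : Type*} [MeasurableSpace Ω] (P : Measure Ω)
    [IsProbabilityMeasure P] (α : ℝ≥0)
    (N : Ω → ℕ) (X : ℕ → Ω → ℝ)
    (hN : Measurable N) (hX : ∀ i, Measurable (X i))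
    (hNdist : P.map N = poissonMeasure α)
    (hXdist : ∀ i, P.map (X i) = expMeasure 1)
    (hXindep : iIndepFun X P)
    (hNX : IndepFun N (fun ω i => X i ω) P)
    (Z : Ω → ℝ) (hZ : ∀ ω, Z ω = ∑ i ∈ Finset.range (N ω), X i ω)
    {t : ℝ} (ht : t < 1) :
    ∫⁻ ω, ENNReal.ofReal (Real.exp (t * Z ω)) ∂P
      = ENNReal.ofReal (Real.exp ((α : ℝ) * (1 / (1 - t) - 1))) := by
  have h1t : (0:ℝ) < 1 - t := by linarith
  set s : ℕ → Set Ω := fun n => N ⁻¹' {n} with hs_def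
  have hs : ∀ n, MeasurableSet (s n) := fun n => hN (measurableSet_singleton n)
  have hdisj : Pairwise (Function.onFun Disjoint s) := fun m n hmn =>
    Disjoint.preimage N (by simpa using hmn)
  have hcover : (⋃ n, s n) = univ := by ext ω; simp [hs_def]
  have hPn : ∀ n, P (s n) = ENNReal.ofReal (poissonPMFReal α n) := by
    intro n
    rw [hs_def]
    rw [← Measure.map_apply hN (measurableSet_singleton n), hNdist,
      poissonMeasure_singleton]
    rfl
  have key : ∀ n : ℕ, ∫⁻ ω in s n, ENNReal.ofReal (Real.exp (t * Z ω)) ∂P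
      = ENNReal.ofReal (poissonPMFReal α n) * ENNReal.ofReal (1 / (1 - t)) ^ n := by
    intro n
    have hcongr : ∫⁻ ω in s n, ENNReal.ofReal (Real.exp (t * Z ω)) ∂P
        = ∫⁻ ω in s n, ENNReal.ofReal (Real.exp (t * ∑ i ∈ Finset.range n, X i ω)) ∂P := by
      refine setLIntegral_congr_fun (hs n) (fun ω hω => ?_)
      have : N ω = n := hω
      rw [hZ ω, this]
    rw [hcongr]
    have hG : Measurable fun x : ℕ → ℝ =>
        ENNReal.ofReal (Real.exp (t * ∑ i ∈ Finset.range n, x i)) := by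
      refine Measurable.ennreal_ofReal (Measurable.exp (Measurable.const_mul ?_ t))
      exact Finset.measurable_sum _ fun i _ => measurable_pi_apply i
    have hind : IndepFun (fun ω => (if N ω = n then (1:ℝ≥0∞) else 0))
        (fun ω => ENNReal.ofReal (Real.exp (t * ∑ i ∈ Finset.range n, X i ω))) P := by
      exact hNX.comp (measurable_from_top (f := fun k : ℕ => if k = n then (1:ℝ≥0∞) else 0)) hG
    have hmul : ∫⁻ ω in s n, ENNReal.ofReal (Real.exp (t * ∑ i ∈ Finset.range n, X i ω)) ∂P
        = ∫⁻ ω, (if N ω = n then (1:ℝ≥0∞) else 0)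
            * ENNReal.ofReal (Real.exp (t * ∑ i ∈ Finset.range n, X i ω)) ∂P := by
      rw [← lintegral_indicator (hs n)]
      congr 1; ext ω
      by_cases hω : N ω = n
      · simp [Set.indicator, hs_def, hω]
      · simp [Set.indicator, hs_def, hω]
    have hm1 : Measurable fun ω => (if N ω = n then (1:ℝ≥0∞) else 0) :=
      Measurable.comp (measurable_from_top (f := fun k : ℕ => if k = n then (1:ℝ≥0∞) else 0)) hN
    have hm2 : Measurable fun ω => ENNReal.ofReal (Real.exp (t * ∑ i ∈ Finset.range n, X i ω)) :=
      hG.comp (measurable_pi_lambda _ fun i => hX i)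
    rw [hmul, lintegral_mul_eq_lintegral_mul_lintegral_of_indepFun'' hm1.aemeasurable
      hm2.aemeasurable hind]
    congr 1
    · have : ∫⁻ ω, (if N ω = n then (1:ℝ≥0∞) else 0) ∂P = P (s n) := by
        rw [← lintegral_indicator_one (hs n)]
        congr 1; ext ω
        by_cases hω : N ω = n <;> simp [Set.indicator, hs_def, hω]
      rw [this, hPn n]
    · exact cpec_lintegral_exp_sum P X hX hXdist hXindep ht n
  calc ∫⁻ ω, ENNReal.ofReal (Real.exp (t * Z ω)) ∂P
      = ∫⁻ ω in ⋃ n, s n, ENNReal.ofReal (Real.exp (t * Z ω)) ∂P := by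
        rw [hcover, Measure.restrict_univ]
    _ = ∑' n, ∫⁻ ω in s n, ENNReal.ofReal (Real.exp (t * Z ω)) ∂P :=
        lintegral_iUnion hs hdisj _
    _ = ∑' n, ENNReal.ofReal (poissonPMFReal α n * (1 / (1 - t)) ^ n) := by
        refine tsum_congr fun n => ?_
        rw [key n, ← ENNReal.ofReal_pow (by positivity), ← ENNReal.ofReal_mul
          poissonPMFReal_nonneg]
    _ = ENNReal.ofReal (Real.exp ((α : ℝ) * (1 / (1 - t) - 1))) := by
        have hβ : (0:ℝ) ≤ (α : ℝ) / (1 - t) := by positivity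
        have hsum : HasSum (fun n : ℕ => poissonPMFReal α n * (1 / (1 - t)) ^ n)
            (Real.exp ((α : ℝ) * (1 / (1 - t) - 1))) := by
          have h1 : HasSum (fun n : ℕ => ((α : ℝ) / (1 - t)) ^ n / n !)
              (Real.exp ((α : ℝ) / (1 - t))) := by
            rw [Real.exp_eq_exp_ℝ]
            exact NormedSpace.expSeries_div_hasSum_exp _
          have h2 := h1.mul_left (Real.exp (-(α : ℝ)))
          have heq : ∀ n : ℕ, Real.exp (-(α:ℝ)) * (((α : ℝ) / (1 - t)) ^ n / n !)
              = poissonPMFReal α n * (1 / (1 - t)) ^ n := by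
            intro n
            rw [poissonPMFReal]
            have : ((n ! : ℝ)) ≠ 0 := by positivity
            field_simp
            ring
          have heq2 : Real.exp (-(α:ℝ)) * Real.exp ((α : ℝ) / (1 - t))
              = Real.exp ((α : ℝ) * (1 / (1 - t) - 1)) := by
            rw [← Real.exp_add]; ring_nf
          rw [← heq2]
          exact (funext heq ▸ h2)
        rw [← hsum.tsum_eq]
        exact (ENNReal.ofReal_tsum_of_nonneg
          (fun n => mul_nonneg poissonPMFReal_nonneg (by positivity)) hsum.summable).symm

lemma cpec_chernoff {Ω : Type*} [MeasurableSpace Ω] (P : Measure Ω)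
    [IsProbabilityMeasure P] (α : ℝ≥0)
    (N : Ω → ℕ) (X : ℕ → Ω → ℝ)
    (hN : Measurable N) (hX : ∀ i, Measurable (X i))
    (hNdist : P.map N = poissonMeasure α)
    (hXdist : ∀ i, P.map (X i) = expMeasure 1)
    (hXindep : iIndepFun X P)
    (hNX : IndepFun N (fun ω i => X i ω) P)
    (Z : Ω → ℝ) (hZ : ∀ ω, Z ω = ∑ i ∈ Finset.range (N ω), X i ω)
    {t a : ℝ} (ht : t < 1) (E : Set Ω)
    (hE : ∀ ω ∈ E, Real.exp (t * a) ≤ Real.exp (t * Z ω)) :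
    P E ≤ ENNReal.ofReal (Real.exp ((α : ℝ) * (1 / (1 - t) - 1) - t * a)) := by
  have hZm : Measurable Z := by
    have hF : Measurable fun p : (ℕ → ℝ) × ℕ => ∑ i ∈ Finset.range p.2, p.1 i :=
      measurable_from_prod_countable_left fun n =>
        Finset.measurable_sum (Finset.range n) fun i _ => measurable_pi_apply i
    have : Z = fun ω => (fun p : (ℕ → ℝ) × ℕ => ∑ i ∈ Finset.range p.2, p.1 i)
        ((fun i => X i ω), N ω) := funext fun ω => hZ ω
    rw [this]
    exact hF.comp ((measurable_pi_lambda _ fun i => hX i).prodMk hN)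
  have hL := cpec_lintegral_exp_Z P α N X hN hX hNdist hXdist hXindep hNX Z hZ ht
  have hfm : Measurable fun ω => ENNReal.ofReal (Real.exp (t * Z ω)) := by fun_prop
  have markov := mul_meas_ge_le_lintegral₀ (μ := P) hfm.aemeasurable
    (ENNReal.ofReal (Real.exp (t * a)))
  have hε0 : ENNReal.ofReal (Real.exp (t * a)) ≠ 0 :=
    (ENNReal.ofReal_pos.mpr (Real.exp_pos _)).ne'
  have hεtop : ENNReal.ofReal (Real.exp (t * a)) ≠ ⊤ := ENNReal.ofReal_ne_top
  calc P E ≤ P {ω | ENNReal.ofReal (Real.exp (t * a)) ≤ ENNReal.ofReal (Real.exp (t * Z ω))} :=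
        measure_mono fun ω hω => ENNReal.ofReal_le_ofReal (hE ω hω)
    _ = (ENNReal.ofReal (Real.exp (t * a)))⁻¹ * ((ENNReal.ofReal (Real.exp (t * a))) *
          P {ω | ENNReal.ofReal (Real.exp (t * a)) ≤ ENNReal.ofReal (Real.exp (t * Z ω))}) := by
        rw [← mul_assoc, ENNReal.inv_mul_cancel hε0 hεtop, one_mul]
    _ ≤ (ENNReal.ofReal (Real.exp (t * a)))⁻¹ *
          ∫⁻ ω, ENNReal.ofReal (Real.exp (t * Z ω)) ∂P := mul_le_mul_right markov _
    _ = ENNReal.ofReal (Real.exp ((α : ℝ) * (1 / (1 - t) - 1) - t * a)) := by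
        rw [hL, ← ENNReal.ofReal_inv_of_pos (Real.exp_pos _), ← Real.exp_neg,
          ← ENNReal.ofReal_mul (Real.exp_pos _).le, ← Real.exp_add]
        congr 1
        ring

end CPECAux

/-- Concentration for a compound Poisson sum of i.i.d. exponential weights:
if `Z = X_1 + ... + X_N` with `N` Poisson of mean `α` and `(X_i)` i.i.d. exponential of mean 1,
independent of `N`, then for `0 < ρ < 1`,
`P[|Z - α| > αρ] ≤ 2 exp(-α(2+ρ-2√(1+ρ))) ≤ 2 exp(-α(ρ²/4 - ρ³/8))`. -/
theorem compound_poisson_exponential_concentration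
    {Ω : Type*} [MeasurableSpace Ω] (P : Measure Ω) [IsProbabilityMeasure P]
    (α : ℝ≥0) (hα : 0 < α)
    (N : Ω → ℕ) (X : ℕ → Ω → ℝ)
    (hN : Measurable N) (hX : ∀ i, Measurable (X i))
    -- `N` is Poisson with mean `α`
    (hNdist : P.map N = poissonMeasure α)
    -- each `X i` is exponentially distributed with rate (hence mean) 1
    (hXdist : ∀ i, P.map (X i) = expMeasure 1)
    -- the `X i` are independent (hence, having the same law, i.i.d.)
    (hXindep : iIndepFun X P)
    -- the sequence `(X i)` is independent of `N`
    (hNX : IndepFun N (fun ω i => X i ω) P)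
    -- `Z` is the compound Poisson sum
    (Z : Ω → ℝ) (hZ : ∀ ω, Z ω = ∑ i ∈ Finset.range (N ω), X i ω)
    (ρ : ℝ) (hρ0 : 0 < ρ) (hρ1 : ρ < 1) :
    P {ω | (α : ℝ) * ρ < |Z ω - (α : ℝ)|} ≤
        ENNReal.ofReal (2 * Real.exp (-(α : ℝ) * (2 + ρ - 2 * Real.sqrt (1 + ρ)))) ∧
      ENNReal.ofReal (2 * Real.exp (-(α : ℝ) * (2 + ρ - 2 * Real.sqrt (1 + ρ)))) ≤
        ENNReal.ofReal (2 * Real.exp (-(α : ℝ) * (ρ ^ 2 / 4 - ρ ^ 3 / 8))) := by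
  have hα0 : (0:ℝ) < (α : ℝ) := hα
  set q : ℝ := Real.sqrt (1 + ρ) with hq_def
  set p : ℝ := Real.sqrt (1 - ρ) with hp_def
  have hq2 : q ^ 2 = 1 + ρ := Real.sq_sqrt (by linarith)
  have hp2 : p ^ 2 = 1 - ρ := Real.sq_sqrt (by linarith)
  have hq0 : 0 ≤ q := Real.sqrt_nonneg _
  have hp0 : 0 < p := Real.sqrt_pos.mpr (by linarith)
  have hq1 : 1 < q := by nlinarith
  have hp1 : p < 1 := by nlinarith
  -- upper-tail bound with t = 1 - 1/q
  set t : ℝ := 1 - 1/q with ht_def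
  have ht : t < 1 := by
    have h : 0 < 1/q := by positivity
    rw [ht_def]; linarith
  have ht0 : 0 < t := by
    have : 1/q < 1 := by rw [div_lt_one (by linarith)]; linarith
    simp only [ht_def]; linarith
  have hbound1 : P {ω | (α : ℝ) * (1 + ρ) < Z ω} ≤
      ENNReal.ofReal (Real.exp (-(α : ℝ) * (2 + ρ - 2 * q))) := by
    have h := cpec_chernoff P α N X hN hX hNdist hXdist hXindep hNX Z hZ
      (a := (α : ℝ) * (1 + ρ)) ht {ω | (α : ℝ) * (1 + ρ) < Z ω}
      (fun ω hω => Real.exp_le_exp.mpr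
        (mul_le_mul_of_nonneg_left (le_of_lt hω) ht0.le))
    have hexp : (α : ℝ) * (1 / (1 - t) - 1) - t * ((α : ℝ) * (1 + ρ))
        = -(α : ℝ) * (2 + ρ - 2 * q) := by
      have hqne : q ≠ 0 := by positivity
      rw [ht_def, show (1:ℝ) - (1 - 1/q) = 1/q by ring, one_div_one_div,
        show ρ = q^2 - 1 by linarith]
      field_simp
      ring
    rwa [hexp] at h
  -- lower-tail bound with u = 1 - 1/p < 0
  set u : ℝ := 1 - 1/p with hu_def
  have hu : u < 1 := by
    have h : 0 < 1/p := by positivity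
    rw [hu_def]; linarith
  have hu0 : u < 0 := by
    have : 1 < 1/p := by rw [lt_div_iff₀ hp0]; linarith
    simp only [hu_def]; linarith
  have hbound2 : P {ω | Z ω < (α : ℝ) * (1 - ρ)} ≤
      ENNReal.ofReal (Real.exp (-(α : ℝ) * (2 - ρ - 2 * p))) := by
    have h := cpec_chernoff P α N X hN hX hNdist hXdist hXindep hNX Z hZ
      (a := (α : ℝ) * (1 - ρ)) hu {ω | Z ω < (α : ℝ) * (1 - ρ)}
      (fun ω hω => Real.exp_le_exp.mpr
        (mul_le_mul_of_nonpos_left (le_of_lt hω) hu0.le))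
    have hexp : (α : ℝ) * (1 / (1 - u) - 1) - u * ((α : ℝ) * (1 - ρ))
        = -(α : ℝ) * (2 - ρ - 2 * p) := by
      have hpne : p ≠ 0 := hp0.ne'
      rw [hu_def, show (1:ℝ) - (1 - 1/p) = 1/p by ring, one_div_one_div,
        show ρ = 1 - p^2 by linarith]
      field_simp
      ring
    rwa [hexp] at h
  -- the lower-tail exponent is at least the upper-tail exponent
  have hpq : p + q ≤ 2 := by
    nlinarith [sq_nonneg (p*q - 1), sq_nonneg (p + q - 2), mul_nonneg hp0.le hq0]
  have hc12 : -(α : ℝ) * (2 - ρ - 2 * p) ≤ -(α : ℝ) * (2 + ρ - 2 * q) := by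
    have : 2 + ρ - 2 * q ≤ 2 - ρ - 2 * p := by nlinarith
    nlinarith
  have hbound2' : P {ω | Z ω < (α : ℝ) * (1 - ρ)} ≤
      ENNReal.ofReal (Real.exp (-(α : ℝ) * (2 + ρ - 2 * q))) :=
    hbound2.trans (ENNReal.ofReal_le_ofReal (Real.exp_le_exp.mpr hc12))
  constructor
  · -- union bound
    have hsub : {ω | (α : ℝ) * ρ < |Z ω - (α : ℝ)|} ⊆
        {ω | (α : ℝ) * (1 + ρ) < Z ω} ∪ {ω | Z ω < (α : ℝ) * (1 - ρ)} := by
      intro ω hω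
      simp only [Set.mem_setOf_eq] at hω
      rcases lt_abs.mp hω with h | h
      · left; simp only [Set.mem_setOf_eq]; linarith
      · right; simp only [Set.mem_setOf_eq]; linarith
    calc P {ω | (α : ℝ) * ρ < |Z ω - (α : ℝ)|}
        ≤ P ({ω | (α : ℝ) * (1 + ρ) < Z ω} ∪ {ω | Z ω < (α : ℝ) * (1 - ρ)}) :=
          measure_mono hsub
      _ ≤ P {ω | (α : ℝ) * (1 + ρ) < Z ω} + P {ω | Z ω < (α : ℝ) * (1 - ρ)} :=
          measure_union_le _ _
      _ ≤ ENNReal.ofReal (Real.exp (-(α : ℝ) * (2 + ρ - 2 * q)))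
            + ENNReal.ofReal (Real.exp (-(α : ℝ) * (2 + ρ - 2 * q))) :=
          add_le_add hbound1 hbound2'
      _ = ENNReal.ofReal (2 * Real.exp (-(α : ℝ) * (2 + ρ - 2 * q))) := by
          rw [← ENNReal.ofReal_add (Real.exp_pos _).le (Real.exp_pos _).le]
          congr 1
          ring
  · -- comparison of the two exponential bounds
    refine ENNReal.ofReal_le_ofReal ?_
    have hABT : q ≤ 1 + ρ/2 - ρ^2/8 + ρ^3/16 := by
      have hA0 : (0:ℝ) ≤ 1 + ρ/2 - ρ^2/8 + ρ^3/16 := by nlinarith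
      have h2 : 1 + ρ ≤ (1 + ρ/2 - ρ^2/8 + ρ^3/16) ^ 2 := by
        nlinarith [pow_nonneg hρ0.le 4, mul_nonneg (pow_nonneg hρ0.le 4) (sq_nonneg (ρ - 2))]
      calc q = Real.sqrt (1 + ρ) := hq_def
        _ ≤ Real.sqrt ((1 + ρ/2 - ρ^2/8 + ρ^3/16) ^ 2) := Real.sqrt_le_sqrt h2
        _ = 1 + ρ/2 - ρ^2/8 + ρ^3/16 := Real.sqrt_sq hA0
    have : -(α : ℝ) * (2 + ρ - 2 * q) ≤ -(α : ℝ) * (ρ ^ 2 / 4 - ρ ^ 3 / 8) := by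
      have h1 : ρ ^ 2 / 4 - ρ ^ 3 / 8 ≤ 2 + ρ - 2 * q := by nlinarith
      nlinarith
    exact mul_le_mul_of_nonneg_left (Real.exp_le_exp.mpr this) (by norm_num)
end
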